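/- arXiv:2106.00631 — 3 statements merged into one kernel-verified Lean document; each statement's English description precedes it below -/
import Mathlib

section
/- For an automorphism σ of a d-ary rooted tree T the following are equivalent: (1) σ is strongly settled; (2) for every x ∈ ∂T the closure of the σ-orbit of x is clopen; (3) the action of ⟨σ⟩ on ∂T has only finitely many minimal components. -/
/-- The boundary of the spherically homogeneous rooted tree with spherical
index `m`: infinite paths are sequences `x` with `x n ∈ {0, …, m n - 1}`. -/
abbrev Bd (m : ℕ → ℕ) : Type := ∀ n : ℕ, Fin (m n)

/-- A permutation of the boundary is a tree automorphism iff it preserves the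
relation "agree on the first `N` coordinates" (i.e. it permutes each vertex
level preserving the tree structure). -/
def IsTreeAut {m : ℕ → ℕ} (e : Equiv.Perm (Bd m)) : Prop :=
  ∀ (N : ℕ) (x y : Bd m), (∀ n < N, x n = y n) ↔ (∀ n < N, e x n = e y n)

/-- The automorphism group of the spherically homogeneous rooted tree with
spherical index `m`, realized as a subgroup of the permutations of the
boundary. -/
def treeAutGroup (m : ℕ → ℕ) : Subgroup (Equiv.Perm (Bd m)) where
  carrier := {e | IsTreeAut e}
  one_mem' := fun _ _ _ => Iff.rfl
  mul_mem' := by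
    intro a b ha hb N x y
    exact (hb N x y).trans (ha N (b x) (b y))
  inv_mem' := by
    intro a ha N x y
    have h := ha N (a⁻¹ x) (a⁻¹ y)
    simpa [Equiv.Perm.inv_def, Equiv.apply_symm_apply] using h.symm

/-- The orbit of `x` under the cyclic group generated by `a`. -/
def orbitZ {m : ℕ → ℕ} (a : Equiv.Perm (Bd m)) (x : Bd m) : Set (Bd m) :=
  {y | ∃ k : ℤ, (a ^ k) x = y}

/-- `a` acts transitively on every vertex level `V n` (vertices at level `n`
are identified with length-`n` prefixes of boundary points). -/
def LevelTransitive {m : ℕ → ℕ} (a : Equiv.Perm (Bd m)) : Prop :=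
  ∀ (n : ℕ) (x y : Bd m), ∃ k : ℤ, ∀ i < n, ((a ^ k) x) i = y i

/-- `f` belongs to the closure of the set `Γ` of tree automorphisms in the
profinite (= uniform) topology on `Aut(T)`: for every level `n` there is an
element of `Γ` agreeing with `f` up to level `n` everywhere. -/
def InClosure {m : ℕ → ℕ} (Γ : Set (Equiv.Perm (Bd m))) (f : Bd m → Bd m) : Prop :=
  ∀ n : ℕ, ∃ g ∈ Γ, ∀ x : Bd m, ∀ i < n, f x i = g x i

variable {d : ℕ}

/-- The vertex `v` (identified with any boundary point passing through it)
lies in a cycle of length `k` of the restriction of `σ` to the level-`n`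
vertices of the `d`-ary tree. -/
def InCycle (σ : Equiv.Perm (Bd (fun _ => d))) (n k : ℕ) (v : Bd (fun _ => d)) : Prop :=
  0 < k ∧ (∀ i < n, ((σ ^ k) v) i = v i) ∧
    ∀ j, 0 < j → j < k → ¬ (∀ i < n, ((σ ^ j) v) i = v i)

/-- `x` passes through a level-`n` vertex lying above the cycle of the
level-`n` vertex of `v`. -/
def AboveCycle (σ : Equiv.Perm (Bd (fun _ => d))) (n : ℕ) (v x : Bd (fun _ => d)) : Prop :=
  ∃ j : ℕ, ∀ i < n, x i = ((σ ^ j) v) i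

/-- The vertex of `v` at level `n` lies in a *stable* cycle of length `k` of
`σ`: it lies in a cycle of length `k`, and for every level `m > n` all the
vertices of level `m` lying above this cycle are in one single cycle of the
restriction of `σ` to level `m` (necessarily of length `d^(m-n) * k`). -/
def InStableCycle (σ : Equiv.Perm (Bd (fun _ => d))) (n k : ℕ) (v : Bd (fun _ => d)) : Prop :=
  InCycle σ n k v ∧
    ∀ mlev, n < mlev → ∀ x y : Bd (fun _ => d), AboveCycle σ n v x → AboveCycle σ n v y →
      ∃ t : ℕ, ∀ i < mlev, ((σ ^ t) x) i = y i

/-- A level-`n` vertex `w` of the `d`-ary tree is in a stable cycle of `σ`. -/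
def StableVertex (σ : Equiv.Perm (Bd (fun _ => d))) (n : ℕ) (w : Fin n → Fin d) : Prop :=
  ∃ v : Bd (fun _ => d), (∀ i : Fin n, v (i : ℕ) = w i) ∧ ∃ k : ℕ, InStableCycle σ n k v

/-- `σ` is settled: the proportion of level-`n` vertices lying in stable
cycles of `σ` tends to `1` as `n → ∞`. -/
def SettledAut (σ : Equiv.Perm (Bd (fun _ => d))) : Prop :=
  Filter.Tendsto
    (fun n : ℕ => (Nat.card {w : Fin n → Fin d // StableVertex σ n w} : ℝ) /
      (Fintype.card (Fin n → Fin d) : ℝ))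
    Filter.atTop (nhds 1)

/-- `σ` is strongly settled: from some level `n ≥ 1` on, every vertex lies in
a stable cycle of `σ`. -/
def StronglySettledAut (σ : Equiv.Perm (Bd (fun _ => d))) : Prop :=
  ∃ n : ℕ, 0 < n ∧ ∀ w : Fin n → Fin d, StableVertex σ n w

/-- A minimal component of the dynamical system `(∂T, σ)`: a nonempty closed
`σ`-invariant set on which every `σ`-orbit is dense. -/
def IsMinimalComponent (σ : Equiv.Perm (Bd (fun _ => d))) (X : Set (Bd (fun _ => d))) : Prop :=
  X.Nonempty ∧ IsClosed X ∧ ⇑σ '' X = X ∧ ∀ x ∈ X, closure (orbitZ σ x) = X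

namespace SettledAux

variable {d : ℕ} {σ : Equiv.Perm (Bd (fun _ => d))}

/-- Agreement up to level `n`. -/
def EqN (n : ℕ) (x y : Bd (fun _ => d)) : Prop := ∀ i < n, x i = y i

lemma eqN_refl (n : ℕ) (x : Bd (fun _ => d)) : EqN n x x := fun _ _ => rfl

lemma EqN.symm {n : ℕ} {x y : Bd (fun _ => d)} (h : EqN n x y) : EqN n y x :=
  fun i hi => (h i hi).symm

lemma EqN.trans {n : ℕ} {x y z : Bd (fun _ => d)} (h : EqN n x y) (h' : EqN n y z) :
    EqN n x z := fun i hi => (h i hi).trans (h' i hi)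

lemma eqN_mono {n m : ℕ} (hm : m ≤ n) {x y : Bd (fun _ => d)} (h : EqN n x y) :
    EqN m x y := fun i hi => h i (lt_of_lt_of_le hi hm)

lemma shiftZ (hσ : σ ∈ treeAutGroup (fun _ => d)) (k : ℤ) {n : ℕ} {x y : Bd (fun _ => d)}
    (h : EqN n x y) : EqN n ((σ ^ k) x) ((σ ^ k) y) := by
  have hmem : IsTreeAut (σ ^ k) := Subgroup.zpow_mem _ hσ k
  exact (hmem n x y).mp h

lemma shiftNat (hσ : σ ∈ treeAutGroup (fun _ => d)) (k : ℕ) {n : ℕ} {x y : Bd (fun _ => d)}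
    (h : EqN n x y) : EqN n ((σ ^ k) x) ((σ ^ k) y) := by
  have hmem : IsTreeAut (σ ^ k) := Subgroup.pow_mem _ hσ k
  exact (hmem n x y).mp h

lemma shift_pow (hσ : σ ∈ treeAutGroup (fun _ => d)) (k u : ℤ) {n : ℕ} {x y : Bd (fun _ => d)}
    (h : EqN n ((σ ^ u) x) y) : EqN n ((σ ^ (k + u)) x) ((σ ^ k) y) := by
  have := shiftZ hσ k h
  rwa [← Equiv.Perm.mul_apply, ← zpow_add] at this

lemma exists_period (hσ : σ ∈ treeAutGroup (fun _ => d)) (n : ℕ) (x : Bd (fun _ => d)) :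
    ∃ p : ℕ, 0 < p ∧ EqN n ((σ ^ p) x) x := by
  have aux : ∀ a b : ℕ, a < b → EqN n ((σ ^ a) x) ((σ ^ b) x) →
      ∃ p : ℕ, 0 < p ∧ EqN n ((σ ^ p) x) x := by
    intro a b hab h
    refine ⟨b - a, by omega, ?_⟩
    have h1 := shiftZ hσ (-(a : ℤ)) h
    rw [show ((σ : Equiv.Perm (Bd (fun _ => d))) ^ a) = σ ^ (a : ℤ) by rw [zpow_natCast],
        show ((σ : Equiv.Perm (Bd (fun _ => d))) ^ b) = σ ^ (b : ℤ) by rw [zpow_natCast],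
        ← Equiv.Perm.mul_apply, ← Equiv.Perm.mul_apply, ← zpow_add, ← zpow_add] at h1
    rw [show (-(a:ℤ) + a) = 0 by ring, show (-(a:ℤ) + b) = ((b - a : ℕ) : ℤ) by omega] at h1
    rw [zpow_natCast] at h1
    simpa using h1.symm
  obtain ⟨a, b, hab, hfab⟩ :=
    Finite.exists_ne_map_eq_of_infinite (fun j : ℕ => (fun i : Fin n => ((σ ^ j) x) (i : ℕ)))
  have hEq : ∀ a b : ℕ, (fun i : Fin n => ((σ ^ a) x) (i : ℕ)) =
      (fun i : Fin n => ((σ ^ b) x) (i : ℕ)) → EqN n ((σ ^ a) x) ((σ ^ b) x) := by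
    intro a b h i hi
    exact congrFun h ⟨i, hi⟩
  rcases lt_or_gt_of_ne hab with h | h
  · exact aux a b h (hEq a b hfab)
  · exact aux b a h (hEq b a hfab.symm)

lemma int_to_nat (hσ : σ ∈ treeAutGroup (fun _ => d)) (n : ℕ) (x : Bd (fun _ => d)) (k : ℤ) :
    ∃ j : ℕ, EqN n ((σ ^ j) x) ((σ ^ k) x) := by
  obtain ⟨p, hp, hper⟩ := exists_period hσ n x
  have hperZ : EqN n ((σ ^ (p : ℤ)) x) x := by rwa [zpow_natCast]
  have key : ∀ s : ℕ, EqN n ((σ ^ (k + s * p)) x) ((σ ^ k) x) := by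
    intro s
    induction s with
    | zero => simpa using eqN_refl n ((σ ^ k) x)
    | succ s ih =>
      have h1 := shift_pow hσ (k + s * p) (p : ℤ) hperZ
      have h2 : (k + (s : ℤ) * p + p) = k + ((s : ℕ) + 1 : ℕ) * p := by push_cast; ring
      rw [h2] at h1
      exact h1.trans ih
  have hge : (0 : ℤ) ≤ k + (k.natAbs : ℤ) * p := by
    have h1 : (k.natAbs : ℤ) * 1 ≤ (k.natAbs : ℤ) * p := by
      apply mul_le_mul_of_nonneg_left _ (by positivity)
      exact_mod_cast hp
    omega
  refine ⟨(k + (k.natAbs : ℤ) * p).toNat, ?_⟩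
  rw [← zpow_natCast, Int.toNat_of_nonneg hge]
  exact_mod_cast key k.natAbs

/-- Cylinders. -/
def Cyl (n : ℕ) (x : Bd (fun _ => d)) : Set (Bd (fun _ => d)) := {y | EqN n x y}

lemma isClopen_cyl (n : ℕ) (x : Bd (fun _ => d)) : IsClopen (Cyl n x) := by
  have h : Cyl n x = ⋂ i ∈ Finset.range n, (fun y : Bd (fun _ => d) => y i) ⁻¹' {x i} := by
    ext y
    simp [Cyl, EqN, eq_comm]
  rw [h]
  exact isClopen_biInter_finset fun i _ =>
    (isClopen_discrete {x i}).preimage (continuous_apply i)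

lemma exists_cyl_subset {U : Set (Bd (fun _ => d))} (hU : IsOpen U) {x : Bd (fun _ => d)}
    (hx : x ∈ U) : ∃ n, Cyl n x ⊆ U := by
  obtain ⟨I, u, hu, hsub⟩ := isOpen_pi_iff.mp hU x hx
  refine ⟨(I.sup id) + 1, fun y hy => hsub ?_⟩
  intro i hi
  have hiI : i ∈ I := hi
  have hlt : i < I.sup id + 1 := Nat.lt_succ_of_le (Finset.le_sup (f := id) hiI)
  have : x i = y i := hy i hlt
  rw [← this]
  exact (hu i hiI).2

lemma mem_closure_iff_eqN {S : Set (Bd (fun _ => d))} {x : Bd (fun _ => d)} :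
    x ∈ closure S ↔ ∀ n, ∃ s ∈ S, EqN n x s := by
  constructor
  · intro h n
    obtain ⟨s, hs⟩ := mem_closure_iff.mp h (Cyl n x) (isClopen_cyl n x).isOpen (eqN_refl n x)
    exact ⟨s, hs.2, hs.1⟩
  · intro h
    rw [mem_closure_iff]
    intro o ho hxo
    obtain ⟨n, hn⟩ := exists_cyl_subset ho hxo
    obtain ⟨s, hsS, hs⟩ := h n
    exact ⟨s, hn hs, hsS⟩

/-- Orbit closure. -/
def Scl (σ : Equiv.Perm (Bd (fun _ => d))) (x : Bd (fun _ => d)) : Set (Bd (fun _ => d)) :=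
  closure (orbitZ σ x)

lemma mem_Scl {x y : Bd (fun _ => d)} :
    y ∈ Scl σ x ↔ ∀ n, ∃ k : ℤ, EqN n ((σ ^ k) x) y := by
  rw [Scl, mem_closure_iff_eqN]
  constructor
  · intro h n
    obtain ⟨s, ⟨k, hk⟩, hs⟩ := h n
    exact ⟨k, by rw [hk]; exact hs.symm⟩
  · intro h n
    obtain ⟨k, hk⟩ := h n
    exact ⟨(σ ^ k) x, ⟨k, rfl⟩, hk.symm⟩

lemma mem_Scl_self (x : Bd (fun _ => d)) : x ∈ Scl σ x :=
  subset_closure ⟨0, by simp⟩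

lemma Scl_mem_zpow (hσ : σ ∈ treeAutGroup (fun _ => d)) (j : ℤ) {x y : Bd (fun _ => d)}
    (hy : y ∈ Scl σ x) : (σ ^ j) y ∈ Scl σ x := by
  rw [mem_Scl] at hy ⊢
  intro n
  obtain ⟨k, hk⟩ := hy n
  exact ⟨j + k, shift_pow hσ j k hk⟩

lemma Scl_mem_pow (j : ℕ) (x : Bd (fun _ => d)) : (σ ^ j) x ∈ Scl σ x :=
  subset_closure ⟨(j : ℤ), by rw [zpow_natCast]⟩

lemma Scl_symm (hσ : σ ∈ treeAutGroup (fun _ => d)) {x y : Bd (fun _ => d)}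
    (hy : y ∈ Scl σ x) : x ∈ Scl σ y := by
  rw [mem_Scl] at hy ⊢
  intro n
  obtain ⟨k, hk⟩ := hy n
  have h1 := shiftZ hσ (-k) hk
  rw [← Equiv.Perm.mul_apply, ← zpow_add] at h1
  rw [show (-k + k) = 0 by ring] at h1
  simp only [zpow_zero, Equiv.Perm.coe_one, id_eq] at h1
  exact ⟨-k, h1.symm⟩

lemma Scl_eq_of_mem (hσ : σ ∈ treeAutGroup (fun _ => d)) {x y : Bd (fun _ => d)}
    (hy : y ∈ Scl σ x) : Scl σ y = Scl σ x := by
  apply subset_antisymm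
  · exact closure_minimal (fun z hz => by obtain ⟨k, rfl⟩ := hz; exact Scl_mem_zpow hσ k hy)
      isClosed_closure
  · refine closure_minimal (fun z hz => ?_) isClosed_closure
    obtain ⟨k, rfl⟩ := hz
    exact Scl_mem_zpow hσ k (Scl_symm hσ hy)

end SettledAux


namespace SettledAux

variable {d : ℕ} {σ : Equiv.Perm (Bd (fun _ => d))}

lemma isMinimal_Scl (hσ : σ ∈ treeAutGroup (fun _ => d)) (x : Bd (fun _ => d)) :
    IsMinimalComponent σ (Scl σ x) := by
  refine ⟨⟨x, mem_Scl_self x⟩, isClosed_closure, ?_, fun y hy => Scl_eq_of_mem hσ hy⟩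
  ext z
  constructor
  · rintro ⟨y, hy, rfl⟩
    have := Scl_mem_zpow hσ 1 hy
    simpa using this
  · intro hz
    refine ⟨σ⁻¹ z, ?_, Equiv.apply_symm_apply σ z⟩
    have := Scl_mem_zpow hσ (-1) hz
    simpa using this

lemma component_iff (hσ : σ ∈ treeAutGroup (fun _ => d)) {X : Set (Bd (fun _ => d))} :
    IsMinimalComponent σ X ↔ ∃ x, Scl σ x = X := by
  constructor
  · rintro ⟨⟨x, hx⟩, _, _, hmin⟩
    exact ⟨x, hmin x hx⟩
  · rintro ⟨x, rfl⟩
    exact isMinimal_Scl hσ x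

/-- (1) → (2) -/
lemma clopen_of_ss (hσ : σ ∈ treeAutGroup (fun _ => d)) (h : StronglySettledAut σ) :
    ∀ x : Bd (fun _ => d), IsClopen (closure (orbitZ σ x)) := by
  obtain ⟨n, hn, hall⟩ := h
  intro x
  obtain ⟨v, hvw, k, hcyc, hstab⟩ := hall (fun i : Fin n => x (i : ℕ))
  have hvx : EqN n v x := fun i hi => hvw ⟨i, hi⟩
  set A : Set (Bd (fun _ => d)) := ⋃ r ∈ Finset.range k, Cyl n ((σ ^ r) v) with hA
  have hAc : IsClopen A := isClopen_biUnion_finset fun r _ => isClopen_cyl n _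
  obtain ⟨hkpos, hkper, _⟩ := hcyc
  have hkper' : EqN n ((σ ^ k) v) v := hkper
  have reduce : ∀ j : ℕ, ∃ r < k, EqN n ((σ ^ j) v) ((σ ^ r) v) := by
    intro j
    induction j using Nat.strong_induction_on with
    | _ j ih =>
      by_cases hj : j < k
      · exact ⟨j, hj, eqN_refl _ _⟩
      · push_neg at hj
        obtain ⟨r, hr, hred⟩ := ih (j - k) (by omega)
        have step : EqN n ((σ ^ j) v) ((σ ^ (j - k)) v) := by
          have h1 := shiftNat hσ (j - k) hkper'
          rwa [← Equiv.Perm.mul_apply, ← pow_add, Nat.sub_add_cancel hj] at h1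
        exact ⟨r, hr, step.trans hred⟩
  have hAbove : ∀ y, AboveCycle σ n v y ↔ y ∈ A := by
    intro y
    constructor
    · rintro ⟨j, hj⟩
      obtain ⟨r, hr, hred⟩ := reduce j
      have hmem : EqN n ((σ ^ r) v) y := hred.symm.trans (fun i hi => (hj i hi).symm)
      exact Set.mem_biUnion (Finset.mem_range.mpr hr) hmem
    · intro hy
      simp only [hA, Set.mem_iUnion, Finset.mem_range] at hy
      obtain ⟨r, _, hr⟩ := hy
      exact ⟨r, fun i hi => (hr i hi).symm⟩
  have main : closure (orbitZ σ x) = A := by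
    apply subset_antisymm
    · apply closure_minimal _ hAc.isClosed
      rintro z ⟨kk, rfl⟩
      obtain ⟨j, hj⟩ := int_to_nat hσ n v kk
      have h2 : EqN n ((σ ^ kk) v) ((σ ^ kk) x) := shiftZ hσ kk hvx
      exact (hAbove _).mp ⟨j, fun i hi => ((hj.trans h2) i hi).symm⟩
    · intro y hy
      have hyA : AboveCycle σ n v y := (hAbove y).mpr hy
      have hxA : AboveCycle σ n v x := ⟨0, fun i hi => by simpa using (hvx i hi).symm⟩
      show y ∈ Scl σ x
      rw [mem_Scl]
      intro m
      obtain ⟨t, ht⟩ := hstab (n + m + 1) (by omega) x y hxA hyA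
      refine ⟨(t : ℤ), ?_⟩
      rw [zpow_natCast]
      exact fun i hi => ht i (by omega)
  rw [main]
  exact hAc

/-- (2) → (3) -/
lemma finite_of_clopen (hσ : σ ∈ treeAutGroup (fun _ => d))
    (h : ∀ x : Bd (fun _ => d), IsClopen (closure (orbitZ σ x))) :
    {X : Set (Bd (fun _ => d)) | IsMinimalComponent σ X}.Finite := by
  obtain ⟨I, hI⟩ := IsCompact.elim_finite_subcover isCompact_univ (fun x => Scl σ x)
    (fun x => (h x).isOpen) (fun z _ => Set.mem_iUnion.mpr ⟨z, mem_Scl_self z⟩)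
  apply Set.Finite.subset ((I.finite_toSet).image (Scl σ))
  rintro X ⟨⟨x0, hx0⟩, _, _, hmin⟩
  obtain ⟨i, hiI, hx0i⟩ := Set.mem_iUnion₂.mp (hI (Set.mem_univ x0))
  exact ⟨i, hiI, (Scl_eq_of_mem hσ hx0i).symm.trans (hmin x0 hx0)⟩

/-- (3) → (2) -/
lemma clopen_of_finite (hσ : σ ∈ treeAutGroup (fun _ => d))
    (h : {X : Set (Bd (fun _ => d)) | IsMinimalComponent σ X}.Finite) :
    ∀ x : Bd (fun _ => d), IsClopen (closure (orbitZ σ x)) := by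
  intro x
  refine ⟨isClosed_closure, ?_⟩
  rw [← isClosed_compl_iff]
  have hcompl : (closure (orbitZ σ x))ᶜ =
      ⋃ C ∈ {X : Set (Bd (fun _ => d)) | IsMinimalComponent σ X} \ {Scl σ x}, C := by
    ext z
    simp only [Set.mem_compl_iff, Set.mem_iUnion, Set.mem_diff, Set.mem_setOf_eq,
      Set.mem_singleton_iff, exists_prop]
    constructor
    · intro hz
      exact ⟨Scl σ z, ⟨isMinimal_Scl hσ z, fun he => hz (show z ∈ Scl σ x from he ▸ mem_Scl_self z)⟩, mem_Scl_self z⟩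
    · rintro ⟨C, ⟨hC, hne⟩, hzC⟩ hzx
      obtain ⟨c, rfl⟩ := (component_iff hσ).mp hC
      exact hne ((Scl_eq_of_mem hσ hzC).symm.trans (Scl_eq_of_mem hσ hzx))
  rw [hcompl]
  exact Set.Finite.isClosed_biUnion h.diff (fun C hC => hC.1.2.1)

/-- (2) → (1) -/
lemma ss_of_clopen (hσ : σ ∈ treeAutGroup (fun _ => d))
    (h : ∀ x : Bd (fun _ => d), IsClopen (closure (orbitZ σ x))) :
    StronglySettledAut σ := by
  classical
  choose nf hnf using fun z : Bd (fun _ => d) =>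
    exists_cyl_subset (h z).isOpen (mem_Scl_self z)
  obtain ⟨I, hI⟩ := IsCompact.elim_finite_subcover isCompact_univ (fun z => Cyl (nf z) z)
    (fun z => (isClopen_cyl _ _).isOpen) (fun z _ => Set.mem_iUnion.mpr ⟨z, eqN_refl _ _⟩)
  set N : ℕ := I.sup nf + 1 with hN
  have hNpos : 0 < N := Nat.succ_pos _
  have key : ∀ z y : Bd (fun _ => d), EqN N z y → y ∈ Scl σ z := by
    intro z y hzy
    obtain ⟨i, hiI, hzi⟩ := Set.mem_iUnion₂.mp (hI (Set.mem_univ z))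
    have hzi' : EqN (nf i) i z := hzi
    have hle : nf i ≤ N := le_trans (Finset.le_sup hiI) (Nat.le_succ _)
    have hyi : y ∈ Cyl (nf i) i := hzi'.trans (eqN_mono hle hzy)
    rw [show Scl σ z = Scl σ i from Scl_eq_of_mem hσ (hnf i hzi)]
    exact hnf i hyi
  refine ⟨N, hNpos, fun w => ?_⟩
  set v : Bd (fun _ => d) := fun j => if hj : j < N then w ⟨j, hj⟩ else w ⟨0, hNpos⟩ with hv
  have hvw : ∀ i : Fin N, v (i : ℕ) = w i := by
    intro i
    simp only [hv, i.isLt, dif_pos]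
  refine ⟨v, hvw, ?_⟩
  have hex : ∃ p, 0 < p ∧ EqN N ((σ ^ p) v) v := exists_period hσ N v
  obtain ⟨hkpos, hkper⟩ := Nat.find_spec hex
  refine ⟨Nat.find hex, ⟨hkpos, hkper, fun j hj0 hjk hbad => Nat.find_min hex hjk ⟨hj0, hbad⟩⟩, ?_⟩
  intro mlev _ x y hx hy
  have habove : ∀ z : Bd (fun _ => d), AboveCycle σ N v z → z ∈ Scl σ v := by
    rintro z ⟨j, hj⟩
    have h1 : EqN N ((σ ^ j) v) z := fun i hi => (hj i hi).symm
    have h2 : z ∈ Scl σ ((σ ^ j) v) := key _ _ h1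
    rwa [Scl_eq_of_mem hσ (Scl_mem_pow j v)] at h2
  have hxv := habove x hx
  have hyv := habove y hy
  have hyx : y ∈ Scl σ x := by
    rw [Scl_eq_of_mem hσ hxv]
    exact hyv
  obtain ⟨kk, hkk⟩ := mem_Scl.mp hyx mlev
  obtain ⟨t, ht⟩ := int_to_nat hσ mlev x kk
  exact ⟨t, fun i hi => (ht.trans hkk) i hi⟩

end SettledAux


/-- For an automorphism `σ` of the `d`-ary rooted tree the following are
equivalent: (1) `σ` is strongly settled; (2) for every boundary point `x` the
closure of the `σ`-orbit of `x` is clopen; (3) the action of `⟨σ⟩` on the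
boundary has only finitely many minimal components. -/
theorem settled_stmt15 (d : ℕ) (hd : 2 ≤ d)
    (σ : Equiv.Perm (Bd (fun _ => d))) (hσ : σ ∈ treeAutGroup (fun _ => d)) :
    List.TFAE
      [ StronglySettledAut σ,
        (∀ x : Bd (fun _ => d), IsClopen (closure (orbitZ σ x))),
        {X : Set (Bd (fun _ => d)) | IsMinimalComponent σ X}.Finite ] := by
  tfae_have 1 → 2 := SettledAux.clopen_of_ss hσ
  tfae_have 2 → 3 := SettledAux.finite_of_clopen hσ
  tfae_have 3 → 1 := fun h => SettledAux.ss_of_clopen hσ (SettledAux.clopen_of_finite hσ h)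
  tfae_finish
end

section
/- The set of strongly settled automorphisms is dense in Aut(T) for T the d-ary rooted tree: for every τ ∈ Aut(T) and every n ≥ 1 there exists a strongly settled σ ∈ Aut(T) agreeing with τ on V_n (so D(τ, σ) ≤ 2^{−n}). -/
variable {d : ℕ}

namespace SettledAux
variable {d : ℕ} [NeZero d]
open Fin.NatCast

def LL (d : ℕ) [NeZero d] : Fin d :=
  ⟨d - 1, by have := Nat.pos_of_ne_zero (NeZero.ne d); omega⟩

def Od (t : ℕ → Fin d) : ℕ → Fin d := fun j =>
  if ∀ i < j, t i = LL d then t j + 1 else t j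

def Od' (t : ℕ → Fin d) : ℕ → Fin d := fun j =>
  if ∀ i < j, t i = (0 : Fin d) then t j - 1 else t j

lemma LL_add_one : LL d + 1 = 0 := by
  have hd := Nat.pos_of_ne_zero (NeZero.ne d)
  apply Fin.ext
  simp only [Fin.val_add, LL, Fin.val_zero]
  have h1 : ((1 : Fin d)).val = 1 % d := Fin.val_one' d
  rw [h1]
  rcases Nat.lt_or_ge 1 d with h | h
  · rw [Nat.mod_eq_of_lt h]
    have h2 : d - 1 + 1 = d := by omega
    rw [h2, Nat.mod_self]
  · interval_cases d; simp

lemma eq_LL_iff (t : Fin d) : t + 1 = 0 ↔ t = LL d := by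
  constructor
  · intro h
    have h2 : t + 1 = LL d + 1 := by rw [h, LL_add_one]
    exact add_right_cancel h2
  · rintro rfl; exact LL_add_one

lemma zero_sub_one : (0 : Fin d) - 1 = LL d := by
  have := LL_add_one (d := d)
  have : (0 : Fin d) = LL d + 1 := this.symm
  rw [this]; abel

lemma sub_one_eq_zero_iff (t : Fin d) : t - 1 = 0 ↔ t = 0 + 1 := by
  constructor
  · intro h; rw [← h]; abel
  · intro h; rw [h]; abel

lemma Od'_Od (t : ℕ → Fin d) : Od' (Od t) = t := by
  have key : ∀ j, (∀ i < j, Od t i = 0) ↔ (∀ i < j, t i = LL d) := by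
    intro j
    induction j with
    | zero => simp
    | succ j ih =>
      rw [Nat.forall_lt_succ_right, Nat.forall_lt_succ_right, ih]
      constructor
      · rintro ⟨h1, h2⟩
        refine ⟨h1, ?_⟩
        have : Od t j = t j + 1 := by simp only [Od, if_pos h1]
        rw [this] at h2
        exact (eq_LL_iff _).mp h2
      · rintro ⟨h1, h2⟩
        refine ⟨h1, ?_⟩
        have : Od t j = t j + 1 := by simp only [Od, if_pos h1]
        rw [this, h2, LL_add_one]
  funext j
  simp only [Od', key j]
  by_cases h : ∀ i < j, t i = LL d
  · simp only [if_pos h, Od, if_pos h]; abel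
  · simp only [if_neg h, Od, if_neg h]

lemma Od_Od' (t : ℕ → Fin d) : Od (Od' t) = t := by
  have key : ∀ j, (∀ i < j, Od' t i = LL d) ↔ (∀ i < j, t i = 0) := by
    intro j
    induction j with
    | zero => simp
    | succ j ih =>
      rw [Nat.forall_lt_succ_right, Nat.forall_lt_succ_right, ih]
      constructor
      · rintro ⟨h1, h2⟩
        refine ⟨h1, ?_⟩
        have : Od' t j = t j - 1 := by simp only [Od', if_pos h1]
        rw [this] at h2
        have : t j = LL d + 1 := by rw [← h2]; abel
        rw [this, LL_add_one]
      · rintro ⟨h1, h2⟩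
        refine ⟨h1, ?_⟩
        have : Od' t j = t j - 1 := by simp only [Od', if_pos h1]
        rw [this, h2, zero_sub_one]
  funext j
  simp only [Od, key j]
  by_cases h : ∀ i < j, t i = 0
  · simp only [if_pos h, Od', if_pos h]; abel
  · simp only [if_neg h, Od', if_neg h]

lemma Od_local {t s : ℕ → Fin d} {r : ℕ} (h : ∀ i < r, t i = s i) :
    ∀ i < r, Od t i = Od s i := by
  intro j hj
  have hc : (∀ i < j, t i = LL d) ↔ (∀ i < j, s i = LL d) := by
    constructor <;> intro hh i hi <;>
      [rw [← h i (hi.trans hj)]; rw [h i (hi.trans hj)]] <;> exact hh i hi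
  simp only [Od, hc, h j hj]

lemma Od'_local {t s : ℕ → Fin d} {r : ℕ} (h : ∀ i < r, t i = s i) :
    ∀ i < r, Od' t i = Od' s i := by
  intro j hj
  have hc : (∀ i < j, t i = (0:Fin d)) ↔ (∀ i < j, s i = 0) := by
    constructor <;> intro hh i hi <;>
      [rw [← h i (hi.trans hj)]; rw [h i (hi.trans hj)]] <;> exact hh i hi
  simp only [Od', hc, h j hj]


def Sh (m : ℕ) (t : ℕ → Fin d) : ℕ → Fin d := fun i => t (m + i)

lemma Od_zero (t : ℕ → Fin d) : Od t 0 = t 0 + 1 := by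
  simp [Od]

lemma pow_claim (hd : 2 ≤ d) :
    ∀ j, j ≤ d → ∀ t : ℕ → Fin d, Od^[j] t 0 = t 0 + (j : Fin d) ∧
      ∀ i, Od^[j] t (1 + i) =
        if d ≤ (t 0).val + j then Od (Sh 1 t) i else t (1 + i) := by
  intro j
  induction j with
  | zero =>
    intro _ t
    refine ⟨by simp, fun i => ?_⟩
    simp only [Function.iterate_zero, id_eq, Nat.add_zero]
    rw [if_neg (by have := (t 0).isLt; omega)]
  | succ j ih =>
    intro hj t
    have hj' : j ≤ d := by omega
    obtain ⟨ih0, ih1⟩ := ih hj' t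
    have hstep : Od^[j+1] t = Od (Od^[j] t) := Function.iterate_succ_apply' Od j t
    set u := Od^[j] t with hu
    have hjd : j < d := by omega
    have hjv : ((j : Fin d)).val = j := by rw [Fin.val_natCast]; exact Nat.mod_eq_of_lt hjd
    have hu0v : (u 0).val = (((t 0).val + j) % d) := by
      rw [ih0, Fin.val_add, hjv]
    constructor
    · rw [hstep, Od_zero, ih0]
      rw [Nat.cast_add, Nat.cast_one, add_assoc]
    · intro i
      rw [hstep]
      rcases lt_trichotomy ((t 0).val + j) (d - 1) with hc | hc | hc
      · -- no wrap, digit0 not LL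
        have hlt : (t 0).val + j < d := by omega
        have hnot : ¬ d ≤ (t 0).val + j := by omega
        have hu0 : (u 0).val = (t 0).val + j := by
          rw [hu0v, Nat.mod_eq_of_lt hlt]
        have hne : u 0 ≠ LL d := by
          intro h; rw [h] at hu0; simp only [LL] at hu0; omega
        have hcond : ¬ ∀ l < 1 + i, u l = LL d := by
          intro h; exact hne (h 0 (by omega))
        have : Od u (1 + i) = u (1 + i) := by simp only [Od, if_neg hcond]
        rw [this, ih1 i, if_neg hnot]
        have : ¬ d ≤ (t 0).val + (j + 1) := by omega
        rw [if_neg this]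
      · -- exactly at LL
        have hlt : (t 0).val + j < d := by omega
        have hnot : ¬ d ≤ (t 0).val + j := by omega
        have hu0 : (u 0).val = (t 0).val + j := by
          rw [hu0v, Nat.mod_eq_of_lt hlt]
        have hLL : u 0 = LL d := by
          apply Fin.ext; rw [hu0]; simp only [LL]; omega
        have hutail : ∀ l, u (1 + l) = t (1 + l) := by
          intro l; rw [ih1 l, if_neg hnot]
        have hcond : (∀ l < 1 + i, u l = LL d) ↔ (∀ l < i, Sh 1 t l = LL d) := by
          constructor
          · intro h l hl
            have := h (1 + l) (by omega)
            rwa [hutail l] at this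
          · intro h l hl
            rcases Nat.eq_zero_or_pos l with rfl | hlpos
            · exact hLL
            · obtain ⟨l', rfl⟩ : ∃ l', l = 1 + l' := ⟨l - 1, by omega⟩
              rw [hutail l']
              exact h l' (by omega)
        have htrue : d ≤ (t 0).val + (j + 1) := by omega
        rw [if_pos htrue]
        simp only [Od, hcond, hutail i]
        rfl
      · -- already wrapped
        have hge : d ≤ (t 0).val + j := by omega
        have hub : (t 0).val + j < 2 * d := by have := (t 0).isLt; omega
        have hu0 : (u 0).val = (t 0).val + j - d := by
          rw [hu0v]
          rw [Nat.mod_eq_sub_mod hge, Nat.mod_eq_of_lt (by omega)]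
        have hne : u 0 ≠ LL d := by
          intro h; rw [h] at hu0; simp only [LL] at hu0
          have := (t 0).isLt; omega
        have hcond : ¬ ∀ l < 1 + i, u l = LL d := by
          intro h; exact hne (h 0 (by omega))
        have : Od u (1 + i) = u (1 + i) := by simp only [Od, if_neg hcond]
        rw [this, ih1 i, if_pos hge, if_pos (by omega)]


lemma iterate_d (hd : 2 ≤ d) (t : ℕ → Fin d) :
    Od^[d] t 0 = t 0 ∧ ∀ i, Od^[d] t (1 + i) = Od (Sh 1 t) i := by
  obtain ⟨h0, h1⟩ := pow_claim hd d le_rfl t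
  constructor
  · rw [h0]; simp
  · intro i
    rw [h1 i, if_pos (by have := (t 0).isLt; omega)]

lemma iterate_pow (hd : 2 ≤ d) (m : ℕ) (t : ℕ → Fin d) :
    (∀ i < m, Od^[d ^ m] t i = t i) ∧ ∀ i, Od^[d ^ m] t (m + i) = Od (Sh m t) i := by
  induction m generalizing t with
  | zero =>
    refine ⟨by omega, fun i => ?_⟩
    have hsh : Sh 0 t = t := by funext l; simp [Sh]
    simp only [pow_zero, Function.iterate_one, hsh, Nat.zero_add]
  | succ m ih =>
    have hD : ∀ a (t : ℕ → Fin d), (∀ i < m, (Od^[d ^ m])^[a] t i = t i) ∧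
        ∀ i, (Od^[d ^ m])^[a] t (m + i) = Od^[a] (Sh m t) i := by
      intro a
      induction a with
      | zero => intro t; exact ⟨fun _ _ => rfl, fun _ => rfl⟩
      | succ a iha =>
        intro t
        have hs : (Od^[d ^ m])^[a+1] t = Od^[d ^ m] ((Od^[d ^ m])^[a] t) :=
          Function.iterate_succ_apply' _ a t
        set u := (Od^[d ^ m])^[a] t with hu
        obtain ⟨iha1, iha2⟩ := iha t
        obtain ⟨ihm1, ihm2⟩ := ih u
        constructor
        · intro i hi; rw [hs, ihm1 i hi]; exact iha1 i hi
        · intro i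
          rw [hs, ihm2 i]
          have hshu : Sh m u = Od^[a] (Sh m t) := by
            funext l; exact iha2 l
          rw [hshu, ← Function.iterate_succ_apply' Od a]
    have hpow : d ^ (m + 1) = d ^ m * d := pow_succ d m
    have hiter : (Od (d := d))^[d ^ (m+1)] = ((Od (d := d))^[d ^ m])^[d] := by
      rw [hpow]; exact Function.iterate_mul Od (d ^ m) d
    obtain ⟨hD1, hD2⟩ := hD d t
    constructor
    · intro i hi
      rw [hiter]
      rcases Nat.lt_or_ge i m with h | h
      · exact hD1 i h
      · have him : i = m := by omega
        rw [him]
        have h0 := hD2 0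
        rw [Nat.add_zero] at h0
        rw [h0, (iterate_d hd (Sh m t)).1]
        rfl
    · intro i
      rw [hiter]
      have h1 : m + 1 + i = m + (1 + i) := by omega
      rw [h1, hD2 (1 + i), (iterate_d hd (Sh m t)).2 i]
      congr 1
      funext l
      simp only [Sh]
      congr 1
      omega

lemma iterate_step (hd : 2 ≤ d) (m : ℕ) (t : ℕ → Fin d) :
    (∀ i < m, Od^[d ^ m] t i = t i) ∧ Od^[d ^ m] t m = t m + 1 := by
  obtain ⟨h1, h2⟩ := iterate_pow hd m t
  refine ⟨h1, ?_⟩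
  have := h2 0
  rw [Nat.add_zero] at this
  rw [this, Od_zero]
  rfl

lemma odometer_reach (hd : 2 ≤ d) (m : ℕ) (t s : ℕ → Fin d) :
    ∃ a : ℕ, ∀ i < m, Od^[a] t i = s i := by
  induction m with
  | zero => exact ⟨0, by omega⟩
  | succ m ih =>
    obtain ⟨a, ha⟩ := ih
    set u := Od^[a] t with hu
    have hiter : ∀ c (v : ℕ → Fin d), (∀ i < m, (Od^[d ^ m])^[c] v i = v i) ∧
        (Od^[d ^ m])^[c] v m = v m + (c : Fin d) := by
      intro c
      induction c with
      | zero => intro v; exact ⟨fun _ _ => rfl, by simp⟩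
      | succ c ihc =>
        intro v
        obtain ⟨ih1, ih2⟩ := ihc v
        have hs : (Od^[d ^ m])^[c+1] v = Od^[d ^ m] ((Od^[d ^ m])^[c] v) :=
          Function.iterate_succ_apply' _ c v
        obtain ⟨st1, st2⟩ := iterate_step hd m ((Od^[d ^ m])^[c] v)
        constructor
        · intro i hi; rw [hs, st1 i hi, ih1 i hi]
        · rw [hs, st2, ih2, Nat.cast_add, Nat.cast_one, add_assoc]
    set c := (s m - u m).val with hc
    refine ⟨d ^ m * c + a, ?_⟩
    have hsplit : Od^[d ^ m * c + a] t = (Od^[d ^ m])^[c] u := by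
      rw [Function.iterate_add_apply, ← hu, Function.iterate_mul]
    obtain ⟨f1, f2⟩ := hiter c u
    intro i hi
    rcases Nat.lt_or_ge i m with h | h
    · rw [hsplit, f1 i h, ha i h]
    · have : i = m := by omega
      subst this
      rw [hsplit, f2, hc, Fin.cast_val_eq_self, add_sub_cancel]


set_option linter.unusedSectionVars false
section Tree
open Classical

variable (d N : ℕ) [NeZero d] (τ : Equiv.Perm (Bd (fun _ => d)))

def pre (x : Bd (fun _ => d)) : Fin N → Fin d := fun i => x i

def tl (x : Bd (fun _ => d)) : ℕ → Fin d := fun j => x (N + j)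

def glue (p : Fin N → Fin d) (t : ℕ → Fin d) : Bd (fun _ => d) := fun i =>
  if h : i < N then p ⟨i, h⟩ else t (i - N)

def extd (p : Fin N → Fin d) : Bd (fun _ => d) := glue d N p (fun _ => 0)

variable {d N τ}

lemma glue_lt (p : Fin N → Fin d) (t : ℕ → Fin d) {i : ℕ} (h : i < N) :
    glue d N p t i = p ⟨i, h⟩ := dif_pos h

lemma glue_ge (p : Fin N → Fin d) (t : ℕ → Fin d) {i : ℕ} (h : ¬ i < N) :
    glue d N p t i = t (i - N) := dif_neg h

lemma pre_glue (p : Fin N → Fin d) (t : ℕ → Fin d) : pre d N (glue d N p t) = p := by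
  funext i
  simp only [pre, glue]
  rw [dif_pos i.isLt]

lemma tl_glue (p : Fin N → Fin d) (t : ℕ → Fin d) : tl d N (glue d N p t) = t := by
  funext j
  simp only [tl, glue]
  rw [dif_neg (by omega)]
  congr 1
  omega

lemma glue_pre_tl (x : Bd (fun _ => d)) : glue d N (pre d N x) (tl d N x) = x := by
  funext i
  by_cases h : i < N
  · rw [glue_lt _ _ h]; rfl
  · rw [glue_ge _ _ h]
    show x (N + (i - N)) = x i
    congr 1
    omega

lemma extd_agree (p : Fin N → Fin d) {i : ℕ} (h : i < N) : extd d N p i = p ⟨i, h⟩ :=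
  glue_lt _ _ h

lemma pre_eq_of_agree {x y : Bd (fun _ => d)} (h : ∀ i < N, x i = y i) :
    pre d N x = pre d N y := by
  funext i
  exact h i i.isLt

/-- the level-N permutation induced by τ -/
noncomputable def pibar (hτ : IsTreeAut τ) : Equiv.Perm (Fin N → Fin d) :=
  Equiv.ofBijective (fun p => pre d N (τ (extd d N p)))
    (Finite.injective_iff_bijective.mp (by
      intro p q hpq
      have h1 : ∀ i < N, τ (extd d N p) i = τ (extd d N q) i := by
        intro i hi
        have := congrFun hpq (⟨i, hi⟩ : Fin N)
        exact this
      have h2 : ∀ i < N, extd d N p i = extd d N q i := (hτ N _ _).mpr h1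
      funext i
      have h3 := h2 i i.isLt
      rw [extd_agree p i.isLt, extd_agree q i.isLt] at h3
      exact h3))

lemma pibar_spec (hτ : IsTreeAut τ) (x : Bd (fun _ => d)) {i : ℕ} (h : i < N) :
    pibar hτ (pre d N x) ⟨i, h⟩ = τ x i := by
  have hagree : ∀ j < N, extd d N (pre d N x) j = x j := by
    intro j hj
    rw [extd_agree _ hj]
    rfl
  have := (hτ N (extd d N (pre d N x)) x).mp hagree i h
  exact this

lemma pibar_symm_spec (hτ : IsTreeAut τ) (x : Bd (fun _ => d)) {i : ℕ} (h : i < N) :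
    (pibar hτ).symm (pre d N x) ⟨i, h⟩ = τ⁻¹ x i := by
  set p := (pibar hτ).symm (pre d N x) with hp
  have hπ : pibar hτ p = pre d N x := Equiv.apply_symm_apply _ _
  have h1 : ∀ j < N, τ (extd d N p) j = x j := by
    intro j hj
    have : pre d N (τ (extd d N p)) = pre d N x := hπ
    have := congrFun this (⟨j, hj⟩ : Fin N)
    exact this
  have h2 : ∀ j < N, τ (extd d N p) j = τ (τ⁻¹ x) j := by
    intro j hj
    rw [h1 j hj, Equiv.Perm.inv_def, Equiv.apply_symm_apply]
  have h3 : ∀ j < N, extd d N p j = τ⁻¹ x j := (hτ N _ _).mpr h2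
  rw [← h3 i h, extd_agree _ h]

noncomputable def isRep (N : ℕ) (hτ : IsTreeAut τ) (p : Fin N → Fin d) : Prop :=
  ∀ j : ℕ, ((Fintype.equivFin (Fin N → Fin d)) p).val ≤
    ((Fintype.equivFin (Fin N → Fin d)) ((pibar hτ ^ j) p)).val

noncomputable def sigmaF (N : ℕ) (hτ : IsTreeAut τ) (x : Bd (fun _ => d)) : Bd (fun _ => d) :=
  glue d N (pibar hτ (pre d N x))
    (if isRep N hτ (pre d N x) then Od (tl d N x) else tl d N x)

noncomputable def sigmaG (N : ℕ) (hτ : IsTreeAut τ) (x : Bd (fun _ => d)) : Bd (fun _ => d) :=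
  glue d N ((pibar hτ).symm (pre d N x))
    (if isRep N hτ ((pibar hτ).symm (pre d N x)) then Od' (tl d N x) else tl d N x)

lemma sigmaG_sigmaF (hτ : IsTreeAut τ) (x : Bd (fun _ => d)) :
    sigmaG N hτ (sigmaF N hτ x) = x := by
  unfold sigmaG sigmaF
  rw [pre_glue, tl_glue, Equiv.symm_apply_apply]
  by_cases h : isRep N hτ (pre d N x)
  · rw [if_pos h, if_pos h, Od'_Od, glue_pre_tl]
  · rw [if_neg h, if_neg h, glue_pre_tl]

lemma sigmaF_sigmaG (hτ : IsTreeAut τ) (x : Bd (fun _ => d)) :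
    sigmaF N hτ (sigmaG N hτ x) = x := by
  unfold sigmaG sigmaF
  rw [pre_glue, tl_glue, Equiv.apply_symm_apply]
  by_cases h : isRep N hτ ((pibar hτ).symm (pre d N x))
  · rw [if_pos h, if_pos h, Od_Od', glue_pre_tl]
  · rw [if_neg h, if_neg h, glue_pre_tl]

noncomputable def sigma (N : ℕ) (hτ : IsTreeAut τ) : Equiv.Perm (Bd (fun _ => d)) :=
  ⟨sigmaF N hτ, sigmaG N hτ, sigmaG_sigmaF hτ, sigmaF_sigmaG hτ⟩

lemma sigma_lt (hτ : IsTreeAut τ) (x : Bd (fun _ => d)) {i : ℕ} (h : i < N) :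
    sigma N hτ x i = τ x i := by
  show sigmaF N hτ x i = τ x i
  unfold sigmaF
  rw [glue_lt _ _ h, pibar_spec hτ x h]

lemma sigmaF_contract (hτ : IsTreeAut τ) (M : ℕ) (x y : Bd (fun _ => d))
    (h : ∀ i < M, x i = y i) : ∀ i < M, sigmaF N hτ x i = sigmaF N hτ y i := by
  rcases le_or_gt M N with hMN | hMN
  · intro i hi
    have hiN : i < N := lt_of_lt_of_le hi hMN
    show sigma N hτ x i = sigma N hτ y i
    rw [sigma_lt hτ x hiN, sigma_lt hτ y hiN]
    exact (hτ M x y).mp h i hi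
  · have hpre : pre d N x = pre d N y := pre_eq_of_agree (fun i hi => h i (hi.trans hMN))
    have htl : ∀ j < M - N, tl d N x j = tl d N y j := by
      intro j hj
      show x (N + j) = y (N + j)
      exact h (N + j) (by omega)
    have htl2 : ∀ j < M - N,
        (if isRep N hτ (pre d N y) then Od (tl d N x) else tl d N x) j =
        (if isRep N hτ (pre d N y) then Od (tl d N y) else tl d N y) j := by
      intro j hj
      by_cases hr : isRep N hτ (pre d N y)
      · rw [if_pos hr, if_pos hr]
        exact Od_local htl j hj
      · rw [if_neg hr, if_neg hr]
        exact htl j hj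
    intro i hi
    unfold sigmaF
    by_cases hiN : i < N
    · rw [glue_lt _ _ hiN, glue_lt _ _ hiN, hpre]
    · rw [glue_ge _ _ hiN, glue_ge _ _ hiN, hpre]
      exact htl2 (i - N) (by omega)

lemma sigmaG_contract (hτ : IsTreeAut τ) (M : ℕ) (x y : Bd (fun _ => d))
    (h : ∀ i < M, x i = y i) : ∀ i < M, sigmaG N hτ x i = sigmaG N hτ y i := by
  rcases le_or_gt M N with hMN | hMN
  · intro i hi
    have hiN : i < N := lt_of_lt_of_le hi hMN
    unfold sigmaG
    rw [glue_lt _ _ hiN, glue_lt _ _ hiN, pibar_symm_spec hτ x hiN,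
      pibar_symm_spec hτ y hiN]
    have hτinv : IsTreeAut τ⁻¹ := (treeAutGroup (fun _ => d)).inv_mem hτ
    exact (hτinv M x y).mp h i hi
  · have hpre : pre d N x = pre d N y := pre_eq_of_agree (fun i hi => h i (hi.trans hMN))
    have htl : ∀ j < M - N, tl d N x j = tl d N y j := by
      intro j hj
      show x (N + j) = y (N + j)
      exact h (N + j) (by omega)
    intro i hi
    unfold sigmaG
    by_cases hiN : i < N
    · rw [glue_lt _ _ hiN, glue_lt _ _ hiN, hpre]
    · rw [glue_ge _ _ hiN, glue_ge _ _ hiN, hpre]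
      by_cases hr : isRep N hτ ((pibar hτ).symm (pre d N y))
      · rw [if_pos hr, if_pos hr]
        exact Od'_local htl (i - N) (by omega)
      · rw [if_neg hr, if_neg hr]
        exact htl (i - N) (by omega)

lemma sigma_isTreeAut (hτ : IsTreeAut τ) : IsTreeAut (sigma N hτ) := by
  intro M x y
  constructor
  · exact sigmaF_contract hτ M x y
  · intro h
    have h2 := sigmaG_contract (N := N) hτ M (sigma N hτ x) (sigma N hτ y) h
    have e1 : sigmaG N hτ (sigma N hτ x) = x := sigmaG_sigmaF hτ x
    have e2 : sigmaG N hτ (sigma N hτ y) = y := sigmaG_sigmaF hτ y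
    rwa [e1, e2] at h2


lemma pibar_periodic (hτ : IsTreeAut τ) (p : Fin N → Fin d) :
    p ∈ Function.periodicPts ⇑(pibar hτ) := by
  have h : Function.IsPeriodicPt ⇑(pibar hτ)
      (orderOf (pibar hτ : Equiv.Perm (Fin N → Fin d))) p := by
    show (⇑(pibar hτ))^[orderOf (pibar hτ)] p = p
    rw [Equiv.Perm.iterate_eq_pow, pow_orderOf_eq_one]
    rfl
  exact ⟨orderOf (pibar hτ), orderOf_pos (pibar hτ), h⟩

lemma pow_apply_mod (hτ : IsTreeAut τ) (p : Fin N → Fin d) (j : ℕ) :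
    (pibar hτ ^ j) p = (pibar hτ ^ (j % Function.minimalPeriod ⇑(pibar hτ) p)) p := by
  rw [← Equiv.Perm.iterate_eq_pow, ← Equiv.Perm.iterate_eq_pow]
  exact Function.iterate_mod_minimalPeriod_eq.symm

lemma pibar_period_apply (hτ : IsTreeAut τ) (p : Fin N → Fin d) :
    (pibar hτ ^ Function.minimalPeriod ⇑(pibar hτ) p) p = p := by
  rw [← Equiv.Perm.iterate_eq_pow]
  exact Function.iterate_minimalPeriod

lemma pibar_period_pos (hτ : IsTreeAut τ) (p : Fin N → Fin d) :
    0 < Function.minimalPeriod ⇑(pibar hτ) p :=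
  Function.minimalPeriod_pos_of_mem_periodicPts (pibar_periodic hτ p)

open Classical in
noncomputable def cnt (N : ℕ) (hτ : IsTreeAut τ) (j : ℕ) (p : Fin N → Fin d) : ℕ :=
  ((Finset.range j).filter (fun l => isRep N hτ ((pibar hτ ^ l) p))).card

lemma cnt_zero (hτ : IsTreeAut τ) (p : Fin N → Fin d) : cnt N hτ 0 p = 0 := by
  simp [cnt]

open Classical in
lemma cnt_succ (hτ : IsTreeAut τ) (j : ℕ) (p : Fin N → Fin d) :
    cnt N hτ (j + 1) p = cnt N hτ j p +
      if isRep N hτ ((pibar hτ ^ j) p) then 1 else 0 := by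
  unfold cnt
  rw [Finset.range_add_one, Finset.filter_insert]
  by_cases hr : isRep N hτ ((pibar hτ ^ j) p)
  · rw [if_pos hr, if_pos hr, Finset.card_insert_of_notMem (by simp)]
  · rw [if_neg hr, if_neg hr, Nat.add_zero]

lemma sigma_pow (hτ : IsTreeAut τ) (j : ℕ) (x : Bd (fun _ => d)) :
    ((sigma N hτ) ^ j) x =
      glue d N ((pibar hτ ^ j) (pre d N x)) (Od^[cnt N hτ j (pre d N x)] (tl d N x)) := by
  induction j with
  | zero =>
    rw [pow_zero, pow_zero, cnt_zero]
    show x = glue d N ((1 : Equiv.Perm (Fin N → Fin d)) (pre d N x)) (tl d N x)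
    rw [Equiv.Perm.one_apply, glue_pre_tl]
  | succ j ih =>
    have h1 : (sigma N hτ) ^ (j + 1) = sigma N hτ * (sigma N hτ) ^ j := pow_succ' _ _
    rw [h1, Equiv.Perm.mul_apply, ih]
    show sigmaF N hτ _ = _
    unfold sigmaF
    rw [pre_glue, tl_glue, cnt_succ]
    have hpp : pibar hτ ((pibar hτ ^ j) (pre d N x)) = (pibar hτ ^ (j + 1)) (pre d N x) := by
      rw [pow_succ' (pibar hτ) j, Equiv.Perm.mul_apply]
    by_cases hr : isRep N hτ ((pibar hτ ^ j) (pre d N x))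
    · rw [if_pos hr, if_pos hr, hpp]
      congr 1
      rw [← Function.iterate_succ_apply' Od]
    · rw [if_neg hr, if_neg hr, hpp]
      simp

lemma exists_rep (hτ : IsTreeAut τ) (p : Fin N → Fin d) :
    ∃ l < Function.minimalPeriod ⇑(pibar hτ) p, isRep N hτ ((pibar hτ ^ l) p) := by
  set k := Function.minimalPeriod ⇑(pibar hτ) p with hk
  have hkpos : 0 < k := pibar_period_pos hτ p
  set e := Fintype.equivFin (Fin N → Fin d) with he
  obtain ⟨l0, hl0mem, hl0min⟩ := Finset.exists_min_image (Finset.range k)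
    (fun l => (e ((pibar hτ ^ l) p)).val) ⟨0, Finset.mem_range.mpr hkpos⟩
  refine ⟨l0, Finset.mem_range.mp hl0mem, ?_⟩
  intro j
  have hcomp : (pibar hτ ^ j) ((pibar hτ ^ l0) p) = (pibar hτ ^ ((j + l0) % k)) p := by
    rw [← Equiv.Perm.mul_apply, ← pow_add, pow_apply_mod hτ p (j + l0), ← hk]
  rw [hcomp]
  exact hl0min _ (Finset.mem_range.mpr (Nat.mod_lt _ hkpos))

lemma rep_unique (hτ : IsTreeAut τ) (p : Fin N → Fin d) (l1 l2 : ℕ)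
    (h1 : isRep N hτ ((pibar hτ ^ l1) p)) (h2 : isRep N hτ ((pibar hτ ^ l2) p)) :
    (pibar hτ ^ l1) p = (pibar hτ ^ l2) p := by
  set k := Function.minimalPeriod ⇑(pibar hτ) p with hk
  have hkpos : 0 < k := pibar_period_pos hτ p
  set e := Fintype.equivFin (Fin N → Fin d) with he
  have key : ∀ a b : ℕ, (e ((pibar hτ ^ a) p)).val ≤ (e ((pibar hτ ^ b) p)).val →
      True := fun _ _ _ => trivial
  have step : ∀ a b : ℕ, isRep N hτ ((pibar hτ ^ a) p) →
      (e ((pibar hτ ^ a) p)).val ≤ (e ((pibar hτ ^ b) p)).val := by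
    intro a b hrep
    have hj : ∃ j : ℕ, (pibar hτ ^ j) ((pibar hτ ^ a) p) = (pibar hτ ^ b) p := by
      refine ⟨b + (k * a - a), ?_⟩
      have hka : a ≤ k * a := Nat.le_mul_of_pos_left a hkpos
      rw [← Equiv.Perm.mul_apply, ← pow_add]
      have h3 : b + (k * a - a) + a = b + k * a := by omega
      rw [h3, pow_apply_mod hτ p (b + k * a), ← hk, Nat.add_mul_mod_self_left,
        ← pow_apply_mod hτ p b]
    obtain ⟨j, hj⟩ := hj
    have := hrep j
    rwa [hj] at this
  have hle1 := step l1 l2 h1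
  have hle2 := step l2 l1 h2
  have : e ((pibar hτ ^ l1) p) = e ((pibar hτ ^ l2) p) := Fin.ext (le_antisymm hle1 hle2)
  exact e.injective this

open Classical in
lemma cnt_period (hτ : IsTreeAut τ) (p : Fin N → Fin d) :
    cnt N hτ (Function.minimalPeriod ⇑(pibar hτ) p) p = 1 := by
  set k := Function.minimalPeriod ⇑(pibar hτ) p with hk
  obtain ⟨l0, hl0k, hl0rep⟩ := exists_rep hτ p
  have hfil : (Finset.range k).filter (fun l => isRep N hτ ((pibar hτ ^ l) p)) = {l0} := by
    apply Finset.ext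
    intro l
    simp only [Finset.mem_filter, Finset.mem_range, Finset.mem_singleton]
    constructor
    · rintro ⟨hlk, hlrep⟩
      have heq : (pibar hτ ^ l) p = (pibar hτ ^ l0) p := rep_unique hτ p l l0 hlrep hl0rep
      have hiter : (⇑(pibar hτ))^[l] p = (⇑(pibar hτ))^[l0] p := by
        rw [Equiv.Perm.iterate_eq_pow, Equiv.Perm.iterate_eq_pow]
        exact heq
      exact Function.iterate_injOn_Iio_minimalPeriod (Set.mem_Iio.mpr hlk)
        (Set.mem_Iio.mpr hl0k) hiter
    · rintro rfl
      exact ⟨hl0k, hl0rep⟩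
  unfold cnt
  rw [hfil]
  rfl

lemma isRep_shift (hτ : IsTreeAut τ) (p : Fin N → Fin d) (l : ℕ) :
    isRep N hτ ((pibar hτ ^ (l + Function.minimalPeriod ⇑(pibar hτ) p)) p) ↔
      isRep N hτ ((pibar hτ ^ l) p) := by
  have : (pibar hτ ^ (l + Function.minimalPeriod ⇑(pibar hτ) p)) p = (pibar hτ ^ l) p := by
    rw [pow_add, Equiv.Perm.mul_apply, pibar_period_apply hτ p]
  rw [this]

open Classical in
lemma cnt_add_period (hτ : IsTreeAut τ) (p : Fin N → Fin d) (j : ℕ) :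
    cnt N hτ (j + Function.minimalPeriod ⇑(pibar hτ) p) p = cnt N hτ j p + 1 := by
  set k := Function.minimalPeriod ⇑(pibar hτ) p with hk
  induction j with
  | zero =>
    rw [Nat.zero_add, cnt_zero, Nat.zero_add]
    exact cnt_period hτ p
  | succ j ih =>
    have h1 : j + 1 + k = (j + k) + 1 := by omega
    rw [h1, cnt_succ, ih, cnt_succ]
    have h2 := isRep_shift hτ p j
    rw [← hk] at h2
    by_cases hr : isRep N hτ ((pibar hτ ^ j) p)
    · rw [if_pos hr, if_pos (h2.mpr hr)]
    · rw [if_neg hr, if_neg (fun hc => hr (h2.mp hc))]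

lemma cnt_add_mul_period (hτ : IsTreeAut τ) (p : Fin N → Fin d) (j a : ℕ) :
    cnt N hτ (j + a * Function.minimalPeriod ⇑(pibar hτ) p) p = cnt N hτ j p + a := by
  induction a with
  | zero => simp
  | succ a ih =>
    have h1 : j + (a + 1) * Function.minimalPeriod ⇑(pibar hτ) p =
        (j + a * Function.minimalPeriod ⇑(pibar hτ) p) +
          Function.minimalPeriod ⇑(pibar hτ) p := by ring
    rw [h1, cnt_add_period, ih]
    omega


lemma pow_eq_iterate {α : Type*} (π : Equiv.Perm α) (n : ℕ) (x : α) :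
    (π ^ n) x = (⇑π)^[n] x := by rw [Equiv.Perm.iterate_eq_pow]

lemma stable_all (hd : 2 ≤ d) (hτ : IsTreeAut τ) (w : Fin N → Fin d) :
    StableVertex (sigma N hτ) N w := by
  have hpre : pre d N (extd d N w) = w := pre_glue _ _
  set k := Function.minimalPeriod ⇑(pibar hτ) w with hk
  have hkpos : 0 < k := pibar_period_pos hτ w
  refine ⟨extd d N w, fun i => by rw [extd_agree _ i.isLt], k, ⟨hkpos, ?_, ?_⟩, ?_⟩
  · -- σ^k v agrees with v on level N
    intro i hi
    rw [sigma_pow, glue_lt _ _ hi, hpre]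
    have hper : (pibar hτ ^ k) w = w := by rw [hk]; exact pibar_period_apply hτ w
    rw [hper, extd_agree _ hi]
  · -- minimality
    intro j hj0 hjk hcon
    have hper : (pibar hτ ^ j) w = w := by
      funext ii
      have h := hcon ii ii.isLt
      rw [sigma_pow, glue_lt _ _ ii.isLt, hpre, extd_agree _ ii.isLt] at h
      exact h
    have hppt : Function.IsPeriodicPt ⇑(pibar hτ) j w := by
      show (⇑(pibar hτ))^[j] w = w
      rw [← pow_eq_iterate]
      exact hper
    have := hppt.minimalPeriod_le hj0
    omega
  · -- stability
    intro mlev hm x y hx hy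
    obtain ⟨j1, hj1⟩ := hx
    obtain ⟨j2, hj2⟩ := hy
    have hpx : pre d N x = (pibar hτ ^ j1) w := by
      funext ii
      have h := hj1 ii ii.isLt
      rw [sigma_pow, glue_lt _ _ ii.isLt, hpre] at h
      exact h
    have hpy : pre d N y = (pibar hτ ^ j2) w := by
      funext ii
      have h := hj2 ii ii.isLt
      rw [sigma_pow, glue_lt _ _ ii.isLt, hpre] at h
      exact h
    have hkx : Function.minimalPeriod ⇑(pibar hτ) ((pibar hτ ^ j1) w) = k := by
      rw [pow_eq_iterate, hk]
      exact Function.minimalPeriod_apply_iterate (pibar_periodic hτ w) j1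
    have hkj1 : j1 ≤ k * j1 := Nat.le_mul_of_pos_left j1 hkpos
    set b := j2 + (k * j1 - j1) with hb
    set c0 := cnt N hτ b ((pibar hτ ^ j1) w) with hc0
    obtain ⟨a, ha⟩ := odometer_reach hd (mlev - N) (Od^[c0] (tl d N x)) (tl d N y)
    set T := b + a * k with hT
    have hdist : k * (j1 + a) = k * j1 + a * k := by ring
    have hTpre : (pibar hτ ^ T) (pre d N x) = pre d N y := by
      rw [hpx, hpy, ← Equiv.Perm.mul_apply, ← pow_add]
      have h3 : T + j1 = j2 + k * (j1 + a) := by omega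
      rw [h3, pow_apply_mod hτ w (j2 + k * (j1 + a)), ← hk, Nat.add_mul_mod_self_left,
        ← pow_apply_mod hτ w j2]
    have hcnt : cnt N hτ T (pre d N x) = c0 + a := by
      rw [hpx, hc0]
      have h4 : T = b + a * Function.minimalPeriod ⇑(pibar hτ) ((pibar hτ ^ j1) w) := by
        rw [hkx]
      rw [h4]
      exact cnt_add_mul_period hτ ((pibar hτ ^ j1) w) b a
    refine ⟨T, ?_⟩
    intro i hi
    rw [sigma_pow]
    by_cases hiN : i < N
    · rw [glue_lt _ _ hiN, hTpre]
      rfl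
    · rw [glue_ge _ _ hiN, hcnt, Nat.add_comm c0 a, Function.iterate_add_apply]
      have h5 := ha (i - N) (by omega)
      rw [h5]
      show y (N + (i - N)) = y i
      congr 1
      omega

end Tree
end SettledAux

/-- The strongly settled automorphisms are dense in the automorphism group of
the `d`-ary rooted tree: for every `τ ∈ Aut(T)` and every `n ≥ 1` there is a
strongly settled `σ ∈ Aut(T)` agreeing with `τ` on the level-`n` vertices
(equivalently, `D(τ, σ) ≤ 2⁻ⁿ` for the uniform metric). -/
theorem settled_stmt16 (d : ℕ) (hd : 2 ≤ d)
    (τ : Equiv.Perm (Bd (fun _ => d))) (hτ : τ ∈ treeAutGroup (fun _ => d)) (n : ℕ) :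
    ∃ σ : Equiv.Perm (Bd (fun _ => d)), σ ∈ treeAutGroup (fun _ => d) ∧
      StronglySettledAut σ ∧ ∀ x : Bd (fun _ => d), ∀ i < n, σ x i = τ x i := by
  haveI : NeZero d := ⟨by omega⟩
  have hτI : IsTreeAut τ := hτ
  refine ⟨SettledAux.sigma (max n 1) hτI, SettledAux.sigma_isTreeAut hτI,
    ⟨max n 1, by omega, fun w => SettledAux.stable_all hd hτI w⟩, ?_⟩
  intro x i hi
  exact SettledAux.sigma_lt hτI x (lt_of_lt_of_le hi (le_max_left n 1))
end

section
/- Let T be the binary rooted tree and G = ⟨a, b | b² = 1, b a b = a⁻¹⟩ the infinite dihedral group realized in Aut(T) with a minimal. Then every element of the closure of G in Aut(T) that is not in the closure of ⟨a⟩ has order 2; consequently the settled elements are not dense in the closure of G. -/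
/-- `v` lies in a cycle of length `k` of (the map induced by) `f` on the
level-`n` vertices of the binary tree. -/
def InCycleF (f : Bd (fun _ => 2) → Bd (fun _ => 2)) (n k : ℕ) (v : Bd (fun _ => 2)) : Prop :=
  0 < k ∧ (∀ i < n, (f^[k] v) i = v i) ∧
    ∀ j, 0 < j → j < k → ¬ (∀ i < n, (f^[j] v) i = v i)

/-- `x` passes through a level-`n` vertex above the cycle of `v`. -/
def AboveCycleF (f : Bd (fun _ => 2) → Bd (fun _ => 2)) (n : ℕ)
    (v x : Bd (fun _ => 2)) : Prop :=
  ∃ j : ℕ, ∀ i < n, x i = (f^[j] v) i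

/-- The level-`n` vertex of `v` is in a stable cycle of length `k` of `f`. -/
def InStableCycleF (f : Bd (fun _ => 2) → Bd (fun _ => 2)) (n k : ℕ)
    (v : Bd (fun _ => 2)) : Prop :=
  InCycleF f n k v ∧
    ∀ mlev, n < mlev → ∀ x y : Bd (fun _ => 2), AboveCycleF f n v x → AboveCycleF f n v y →
      ∃ t : ℕ, ∀ i < mlev, (f^[t] x) i = y i

/-- The level-`n` vertex `w` of the binary tree is in a stable cycle of `f`. -/
def StableVertexF (f : Bd (fun _ => 2) → Bd (fun _ => 2)) (n : ℕ)
    (w : Fin n → Fin 2) : Prop :=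
  ∃ v : Bd (fun _ => 2), (∀ i : Fin n, v (i : ℕ) = w i) ∧ ∃ k : ℕ, InStableCycleF f n k v

/-- `f` is settled: the proportion of level-`n` vertices in stable cycles
tends to `1` as `n → ∞`. -/
def SettledF (f : Bd (fun _ => 2) → Bd (fun _ => 2)) : Prop :=
  Filter.Tendsto
    (fun n : ℕ => (Nat.card {w : Fin n → Fin 2 // StableVertexF f n w} : ℝ) /
      (Fintype.card (Fin n → Fin 2) : ℝ))
    Filter.atTop (nhds 1)

private lemma aut_agree {m : ℕ → ℕ} {g : Equiv.Perm (Bd m)} (hg : g ∈ treeAutGroup m)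
    {N : ℕ} {x y : Bd m} (h : ∀ n < N, x n = y n) (n : ℕ) (hn : n < N) : g x n = g y n :=
  ((show IsTreeAut g from hg) N x y).mp h n hn

private lemma conj_zpow_lemma {G : Type*} [Group G] {a b : G} (hb2 : b ^ 2 = 1)
    (hrel : b * a * b = a⁻¹) (k : ℤ) : b * a ^ k * b = a ^ (-k) := by
  have hbinv : b⁻¹ = b := inv_eq_of_mul_eq_one_left (by rw [← sq]; exact hb2)
  calc b * a ^ k * b = b * a ^ k * b⁻¹ := by rw [hbinv]
    _ = (b * a * b⁻¹) ^ k := conj_zpow.symm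
    _ = (a⁻¹) ^ k := by rw [hbinv, hrel]
    _ = a ^ (-k) := by rw [inv_zpow, zpow_neg]

private lemma invol_aux {G : Type*} [Group G] {a b : G} (hb2 : b ^ 2 = 1)
    (hrel : b * a * b = a⁻¹) (k : ℤ) : (a ^ k * b) * (a ^ k * b) = 1 := by
  calc (a ^ k * b) * (a ^ k * b) = a ^ k * (b * a ^ k * b) := by group
    _ = a ^ k * a ^ (-k) := by rw [conj_zpow_lemma hb2 hrel]
    _ = 1 := by rw [← zpow_add]; simp

private lemma dihedral_form {G : Type*} [Group G] {a b : G} (hb2 : b ^ 2 = 1)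
    (hrel : b * a * b = a⁻¹) {g : G} (hg : g ∈ Subgroup.closure {a, b}) :
    ∃ k : ℤ, g = a ^ k ∨ g = a ^ k * b := by
  have hbb : b * b = 1 := by rw [← sq]; exact hb2
  have hcomm : ∀ k : ℤ, b * a ^ k = a ^ (-k) * b := by
    intro k
    calc b * a ^ k = (b * a ^ k * b) * b := by rw [mul_assoc, hbb, mul_one]
      _ = a ^ (-k) * b := by rw [conj_zpow_lemma hb2 hrel]
  let S : Subgroup G :=
    { carrier := {g | ∃ k : ℤ, g = a ^ k ∨ g = a ^ k * b}
      one_mem' := ⟨0, Or.inl (by simp)⟩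
      mul_mem' := by
        rintro x y ⟨j, rfl | rfl⟩ ⟨k, rfl | rfl⟩
        · exact ⟨j + k, Or.inl (zpow_add a j k).symm⟩
        · exact ⟨j + k, Or.inr (by rw [← mul_assoc, ← zpow_add])⟩
        · refine ⟨j + -k, Or.inr ?_⟩
          rw [mul_assoc, hcomm, ← mul_assoc, ← zpow_add]
        · refine ⟨j + -k, Or.inl ?_⟩
          calc a ^ j * b * (a ^ k * b) = a ^ j * (b * a ^ k) * b := by group
            _ = a ^ j * (a ^ (-k) * b) * b := by rw [hcomm]
            _ = a ^ j * a ^ (-k) * (b * b) := by group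
            _ = a ^ (j + -k) := by rw [hbb, mul_one, ← zpow_add]
      inv_mem' := by
        rintro x ⟨j, rfl | rfl⟩
        · exact ⟨-j, Or.inl (zpow_neg a j).symm⟩
        · refine ⟨j, Or.inr ?_⟩
          have hbinv : b⁻¹ = b := inv_eq_of_mul_eq_one_left hbb
          rw [mul_inv_rev, hbinv, ← zpow_neg, hcomm, neg_neg] }
  refine (Subgroup.closure_le S).mpr ?_ hg
  rintro z hz
  simp only [Set.mem_insert_iff, Set.mem_singleton_iff] at hz
  rcases hz with rfl | rfl
  · exact ⟨1, Or.inl (zpow_one z).symm⟩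
  · exact ⟨0, Or.inr (by simp)⟩

private lemma exists_pair_ne' : ∀ p q : Fin 2 × Fin 2, ∃ r : Fin 2 × Fin 2, r ≠ p ∧ r ≠ q := by
  decide

private lemma key_two (a b : Equiv.Perm (Bd (fun _ => 2)))
    (ha : a ∈ treeAutGroup (fun _ => 2)) (hb : b ∈ treeAutGroup (fun _ => 2))
    (hamin : LevelTransitive a) (hb2 : b ^ 2 = 1) (hrel : b * a * b = a⁻¹) :
    ¬ ∃ k : ℤ, ∀ x : Bd (fun _ => 2), ∀ i < 2, b x i = (a ^ k) x i := by
  rintro ⟨k, hk⟩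
  have hpa : ∀ p : ℤ, a ^ p ∈ treeAutGroup (fun _ => 2) := fun p =>
    Subgroup.zpow_mem _ ha p
  have ha1 : ∀ y : Bd (fun _ => 2), a y = (a ^ (1 : ℤ)) y := fun y => by rw [zpow_one]
  have hmulz : ∀ (p q : ℤ) (x : Bd (fun _ => 2)),
      (a ^ p) ((a ^ q) x) = (a ^ (p + q)) x :=
    fun p q x => by rw [← Equiv.Perm.mul_apply, ← zpow_add]
  let R : Equiv.Perm (Bd (fun _ => 2)) → Prop := fun g => ∀ x, ∀ i < 2, g x i = x i
  have Rmul : ∀ g h : Equiv.Perm (Bd (fun _ => 2)), g ∈ treeAutGroup (fun _ => 2) →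
      R g → R h → R (g * h) := by
    intro g h hgaut hg hh x i hi
    have h1 : g (h x) i = g x i := aut_agree hgaut (hh x) i hi
    rw [Equiv.Perm.mul_apply, h1]; exact hg x i hi
  have Rinv : ∀ g : Equiv.Perm (Bd (fun _ => 2)), R g → R g⁻¹ := by
    intro g hg x i hi
    have h1 := hg (g⁻¹ x) i hi
    rw [Equiv.Perm.inv_def, Equiv.apply_symm_apply] at h1
    exact h1.symm
  have hbb : ∀ x : Bd (fun _ => 2), b (b x) = x := by
    intro x
    have h1 : (b * b) x = (1 : Equiv.Perm (Bd (fun _ => 2))) x := by rw [← sq, hb2]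
    simpa using h1
  have h1 : R (a ^ (k + k)) := by
    intro x i hi
    have e1 : b (b x) i = b ((a ^ k) x) i := aut_agree hb (hk x) i hi
    have e2 : b ((a ^ k) x) i = (a ^ k) ((a ^ k) x) i := hk ((a ^ k) x) i hi
    rw [hbb] at e1
    rw [← hmulz k k x, ← e2, ← e1]
  have h2 : R (a ^ (1 + (k + (1 + k)))) := by
    intro x
    have hba : b (a (b x)) = a⁻¹ x := by
      have h1' : (b * a * b) x = a⁻¹ x := by rw [hrel]
      simpa using h1'
    have hxx : ∀ j < 2, (a ^ (k + (1 + k))) x j = a⁻¹ x j := by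
      intro j hj
      have e2 : b (a (b x)) j = b (a ((a ^ k) x)) j :=
        aut_agree hb (fun j' hj' => aut_agree ha (hk x) j' hj') j hj
      have e3 : b (a ((a ^ k) x)) j = (a ^ k) (a ((a ^ k) x)) j := hk (a ((a ^ k) x)) j hj
      have e5 : (a ^ k) (a ((a ^ k) x)) = (a ^ (k + (1 + k))) x := by
        rw [ha1 ((a ^ k) x), hmulz 1 k, hmulz k (1 + k)]
      rw [← hba, e2, e3, e5]
    intro i hi
    have e6 : (a ^ (1 + (k + (1 + k)))) x = a ((a ^ (k + (1 + k))) x) := by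
      rw [ha1 ((a ^ (k + (1 + k))) x), hmulz]
    have e7 : a ((a ^ (k + (1 + k))) x) i = a (a⁻¹ x) i := aut_agree ha hxx i hi
    rw [e6, e7, Equiv.Perm.inv_def, Equiv.apply_symm_apply]
  have hsq : R (a ^ (2 : ℤ)) := by
    have h3 : R (a ^ (1 + (k + (1 + k))) * (a ^ (k + k))⁻¹) :=
      Rmul _ _ (hpa _) h2 (Rinv _ h1)
    have e : a ^ (1 + (k + (1 + k))) * (a ^ (k + k))⁻¹ = a ^ (2 : ℤ) := by
      rw [← zpow_neg, ← zpow_add]; congr 1; ring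
    rwa [e] at h3
  have heven : ∀ q : ℤ, R (a ^ (2 * q)) := by
    intro q
    induction q using Int.induction_on with
    | zero => intro x i hi; simp
    | succ n ih =>
        have e : a ^ (2 * ((n : ℤ) + 1)) = a ^ (2 : ℤ) * a ^ (2 * (n : ℤ)) := by
          rw [← zpow_add]; congr 1; ring
        rw [e]; exact Rmul _ _ (hpa 2) hsq ih
    | pred n ih =>
        have e : a ^ (2 * (-(n : ℤ) - 1)) = a ^ (2 * (-(n : ℤ))) * (a ^ (2 : ℤ))⁻¹ := by
          rw [← zpow_neg, ← zpow_add]; congr 1; ring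
        rw [e]; exact Rmul _ _ (hpa _) ih (Rinv _ hsq)
  have hcase : ∀ j : ℤ, ∀ x : Bd (fun _ => 2),
      (∀ i < 2, (a ^ j) x i = x i) ∨ (∀ i < 2, (a ^ j) x i = a x i) := by
    intro j x
    rcases Int.even_or_odd j with ⟨q, hq⟩ | ⟨q, hq⟩
    · left
      have e : a ^ j = a ^ (2 * q) := by rw [hq]; congr 1; ring
      rw [e]; exact heven q x
    · right
      intro i hi
      have e : a ^ j = a ^ (1 : ℤ) * a ^ (2 * q) := by
        rw [← zpow_add, hq]; congr 1; ring
      rw [e, Equiv.Perm.mul_apply, zpow_one]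
      exact aut_agree ha (heven q x) i hi
  set x₀ : Bd (fun _ => 2) := fun _ => (0 : Fin 2) with hx₀
  obtain ⟨⟨r1, r2⟩, hr1, hr2⟩ := exists_pair_ne' (x₀ 0, x₀ 1) (a x₀ 0, a x₀ 1)
  set y : Bd (fun _ => 2) := fun i => if i = 0 then r1 else if i = 1 then r2 else 0 with hy
  have hy0 : y 0 = r1 := rfl
  have hy1 : y 1 = r2 := rfl
  obtain ⟨k', hk'⟩ := hamin 2 x₀ y
  rcases hcase k' x₀ with h | h
  · have e0 : y 0 = x₀ 0 := by rw [← hk' 0 (by norm_num)]; exact h 0 (by norm_num)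
    have e1 : y 1 = x₀ 1 := by rw [← hk' 1 (by norm_num)]; exact h 1 (by norm_num)
    refine hr1 ?_
    rw [Prod.mk.injEq]
    exact ⟨by rw [← hy0]; exact e0, by rw [← hy1]; exact e1⟩
  · have e0 : y 0 = a x₀ 0 := by rw [← hk' 0 (by norm_num)]; exact h 0 (by norm_num)
    have e1 : y 1 = a x₀ 1 := by rw [← hk' 1 (by norm_num)]; exact h 1 (by norm_num)
    refine hr2 ?_
    rw [Prod.mk.injEq]
    exact ⟨by rw [← hy0]; exact e0, by rw [← hy1]; exact e1⟩

private lemma not_settled_of_invol (f : Bd (fun _ => 2) → Bd (fun _ => 2))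
    (hf : f ∘ f = id) : ¬ SettledF f := by
  have hff : ∀ x, f (f x) = x := fun x => congrFun hf x
  have hiter : ∀ (t : ℕ) (x : Bd (fun _ => 2)), f^[t] x = x ∨ f^[t] x = f x := by
    intro t
    induction t with
    | zero => intro x; left; rfl
    | succ t ih =>
        intro x
        rw [Function.iterate_succ_apply]
        rcases ih (f x) with h | h
        · right; rw [h]
        · left; rw [h]; exact hff x
  have hnostable : ∀ (n k : ℕ) (v : Bd (fun _ => 2)), ¬ InStableCycleF f n k v := by
    rintro n k v ⟨-, hstab⟩
    obtain ⟨⟨r1, r2⟩, hr1, hr2⟩ := exists_pair_ne' (v n, v (n + 1)) (f v n, f v (n + 1))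
    set y : Bd (fun _ => 2) := fun i => if i = n then r1 else if i = n + 1 then r2 else v i
      with hy
    have hyn : y n = r1 := by simp [hy]
    have hyn1 : y (n + 1) = r2 := by
      have h1 : ¬ (n + 1 = n) := by omega
      simp [hy, h1]
    have hxC : AboveCycleF f n v v := ⟨0, fun i _ => by rw [Function.iterate_zero_apply]⟩
    have hyC : AboveCycleF f n v y := by
      refine ⟨0, fun i hi => ?_⟩
      rw [Function.iterate_zero_apply]
      have h1 : ¬ (i = n) := by omega
      have h2 : ¬ (i = n + 1) := by omega
      simp [hy, h1, h2]
    obtain ⟨t, ht⟩ := hstab (n + 2) (by omega) v y hxC hyC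
    rcases hiter t v with h | h <;> rw [h] at ht
    · have e0 : v n = r1 := by rw [← hyn]; exact ht n (by omega)
      have e1 : v (n + 1) = r2 := by rw [← hyn1]; exact ht (n + 1) (by omega)
      exact hr1 (by rw [e0, e1])
    · have e0 : f v n = r1 := by rw [← hyn]; exact ht n (by omega)
      have e1 : f v (n + 1) = r2 := by rw [← hyn1]; exact ht (n + 1) (by omega)
      exact hr2 (by rw [e0, e1])
  intro hset
  have hempty : ∀ n : ℕ, Nat.card {w : Fin n → Fin 2 // StableVertexF f n w} = 0 := by
    intro n
    have : IsEmpty {w : Fin n → Fin 2 // StableVertexF f n w} := by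
      constructor
      rintro ⟨w, v, _, kk, hkk⟩
      exact hnostable n kk v hkk
    exact Nat.card_of_isEmpty
  have heq : (fun n : ℕ => (Nat.card {w : Fin n → Fin 2 // StableVertexF f n w} : ℝ) /
      (Fintype.card (Fin n → Fin 2) : ℝ)) = fun _ => (0 : ℝ) := by
    funext n; rw [hempty n]; simp
  rw [SettledF, heq] at hset
  exact one_ne_zero (tendsto_nhds_unique hset tendsto_const_nhds)

/-- Let `T` be the binary rooted tree and let
`G = ⟨a, b | b² = 1, b a b = a⁻¹⟩` be the infinite dihedral group realized in
`Aut(T)` with `a` minimal. Then every element of the closure of `G` in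
`Aut(T)` that is not in the closure of `⟨a⟩` has order `2`; consequently the
settled elements are not dense in the closure of `G`. -/
theorem settled_stmt19 (a b : Equiv.Perm (Bd (fun _ => 2)))
    (ha : a ∈ treeAutGroup (fun _ => 2)) (hb : b ∈ treeAutGroup (fun _ => 2))
    (hamin : LevelTransitive a) (hb2 : b ^ 2 = 1) (hrel : b * a * b = a⁻¹) :
    -- every element of the closure of `G` outside the closure of `⟨a⟩` has order 2 …
    (∀ f : Bd (fun _ => 2) → Bd (fun _ => 2),
      InClosure ((Subgroup.closure {a, b} : Subgroup (Equiv.Perm (Bd (fun _ => 2)))) :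
        Set (Equiv.Perm (Bd (fun _ => 2)))) f →
      ¬ InClosure ((Subgroup.zpowers a : Subgroup (Equiv.Perm (Bd (fun _ => 2)))) :
        Set (Equiv.Perm (Bd (fun _ => 2)))) f →
      f ∘ f = id ∧ f ≠ id) ∧
    -- … and hence the settled elements are not dense in the closure of `G`.
    ¬ (∀ g : Bd (fun _ => 2) → Bd (fun _ => 2),
        InClosure ((Subgroup.closure {a, b} : Subgroup (Equiv.Perm (Bd (fun _ => 2)))) :
          Set (Equiv.Perm (Bd (fun _ => 2)))) g →
        ∀ n : ℕ, ∃ s : Bd (fun _ => 2) → Bd (fun _ => 2),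
          InClosure ((Subgroup.closure {a, b} : Subgroup (Equiv.Perm (Bd (fun _ => 2)))) :
            Set (Equiv.Perm (Bd (fun _ => 2)))) s ∧
          SettledF s ∧ ∀ x : Bd (fun _ => 2), ∀ i < n, s x i = g x i) := by
  have haut : ∀ g ∈ Subgroup.closure ({a, b} : Set (Equiv.Perm (Bd (fun _ => 2)))),
      g ∈ treeAutGroup (fun _ => 2) := by
    intro g hg
    refine (Subgroup.closure_le _).mpr ?_ hg
    rintro z hz
    simp only [Set.mem_insert_iff, Set.mem_singleton_iff] at hz
    rcases hz with rfl | rfl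
    · exact ha
    · exact hb
  have part1 : ∀ f : Bd (fun _ => 2) → Bd (fun _ => 2),
      InClosure ((Subgroup.closure {a, b} : Subgroup (Equiv.Perm (Bd (fun _ => 2)))) :
        Set (Equiv.Perm (Bd (fun _ => 2)))) f →
      ¬ InClosure ((Subgroup.zpowers a : Subgroup (Equiv.Perm (Bd (fun _ => 2)))) :
        Set (Equiv.Perm (Bd (fun _ => 2)))) f →
      f ∘ f = id ∧ f ≠ id := by
    intro f hfG hfa
    have hfne : f ≠ id := by
      rintro rfl
      exact hfa fun n => ⟨1, Subgroup.one_mem _, fun x i _ => rfl⟩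
    unfold InClosure at hfa
    push_neg at hfa
    obtain ⟨n₀, hn₀⟩ := hfa
    have happrox : ∀ n : ℕ, ∃ g : Equiv.Perm (Bd (fun _ => 2)),
        g ∈ treeAutGroup (fun _ => 2) ∧ g * g = 1 ∧ ∀ x, ∀ i < n, f x i = g x i := by
      intro n
      obtain ⟨g, hgG, hg⟩ := hfG (max n n₀)
      rcases dihedral_form hb2 hrel hgG with ⟨k, hk | hk⟩
      · exfalso
        obtain ⟨x, i, hi, hne⟩ := hn₀ g (Subgroup.mem_zpowers_iff.mpr ⟨k, hk.symm⟩)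
        exact hne (hg x i (lt_of_lt_of_le hi (le_max_right n n₀)))
      · exact ⟨g, haut g hgG, by rw [hk]; exact invol_aux hb2 hrel k,
          fun x i hi => hg x i (lt_of_lt_of_le hi (le_max_left n n₀))⟩
    refine ⟨?_, hfne⟩
    funext x
    show f (f x) = x
    funext i
    obtain ⟨g, hgaut, hg1, hg⟩ := happrox (i + 1)
    have e1 : f (f x) i = g (f x) i := hg (f x) i (Nat.lt_succ_self i)
    have e2 : g (f x) i = g (g x) i :=
      aut_agree hgaut (fun j hj => hg x j hj) i (Nat.lt_succ_self i)
    have e3 : g (g x) = x := by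
      rw [← Equiv.Perm.mul_apply, hg1]; rfl
    rw [e1, e2, e3]
  refine ⟨part1, ?_⟩
  intro hdense
  have hbG : InClosure ((Subgroup.closure {a, b} : Subgroup (Equiv.Perm (Bd (fun _ => 2)))) :
      Set (Equiv.Perm (Bd (fun _ => 2)))) ⇑b := fun n =>
    ⟨b, Subgroup.subset_closure (by simp), fun x i _ => rfl⟩
  obtain ⟨s, hsG, hsSet, hsb⟩ := hdense ⇑b hbG 2
  have hsa : ¬ InClosure ((Subgroup.zpowers a : Subgroup (Equiv.Perm (Bd (fun _ => 2)))) :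
      Set (Equiv.Perm (Bd (fun _ => 2)))) s := by
    intro hs
    obtain ⟨g, hgmem, hg⟩ := hs 2
    obtain ⟨k, hk⟩ := Subgroup.mem_zpowers_iff.mp hgmem
    refine key_two a b ha hb hamin hb2 hrel ⟨k, fun x i hi => ?_⟩
    rw [← hsb x i hi, hg x i hi, ← hk]
  obtain ⟨hinv, -⟩ := part1 s hsG hsa
  exact not_settled_of_invol s hinv hsSet
end
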